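/- Let c > 0, d > 0, r > 0, T > 0. Define erf(z) = (2/√π)·∫₀^z e^{−t²} dt, φ(x) = (e^{√(c/d)·x}/2)·(1 + erf( −x/(2√(dT)) − √(cT) )), C₀ = (1/(2r))·√(π/(2dc)), K_T(x) = C₀·(φ(x) + φ(−x)), and K₀(x) = C₀·e^{−√(c/d)·|x|}. Then: (i) K_T(x) < K₀(x) for every x ∈ ℝ; and (ii) lim_{x→+∞} K_T(x)/K₀(x) = 1 and lim_{x→−∞} K_T(x)/K₀(x) = 1. -/

import Mathlib

open MeasureTheory

/-- The Gauss error function. -/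
noncomputable def erf (z : ℝ) : ℝ :=
  (2 / Real.sqrt Real.pi) * ∫ t in (0 : ℝ)..z, Real.exp (-t ^ 2)

open Set Filter

namespace ErfAux

lemma gauss_integrable : Integrable (fun t : ℝ => Real.exp (-t ^ 2)) := by
  simpa using integrable_exp_neg_mul_sq (one_pos : (0:ℝ) < 1)

lemma gauss_int : ∫ t in Ioi (0 : ℝ), Real.exp (-t ^ 2) = Real.sqrt Real.pi / 2 := by
  simpa using integral_gaussian_Ioi 1

lemma shift_integrable (v : ℝ) : Integrable (fun t : ℝ => Real.exp (-(t + v) ^ 2)) :=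
  gauss_integrable.comp_add_right v

lemma shift_eq (v : ℝ) :
    ∫ t in Ioi (0 : ℝ), Real.exp (-(t + v) ^ 2) = ∫ t in Ioi v, Real.exp (-t ^ 2) := by
  have h := (measurePreserving_add_right (volume : Measure ℝ) v).setIntegral_preimage_emb
    (MeasurableEquiv.addRight v).measurableEmbedding (fun t => Real.exp (-t ^ 2)) (Ioi v)
  have hpre : (fun t : ℝ => t + v) ⁻¹' Ioi v = Ioi 0 := by
    ext t; simp [lt_add_iff_pos_left]
  simpa [hpre] using h

lemma erfc_eq (v : ℝ) :
    1 - erf v = (2 / Real.sqrt Real.pi) * ∫ t in Ioi (0 : ℝ), Real.exp (-(t + v) ^ 2) := by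
  have hIoi : ∀ w : ℝ, ∫ t in Ioi w, Real.exp (-t ^ 2)
      = (∫ t : ℝ, Real.exp (-t ^ 2)) - ∫ t in Iic w, Real.exp (-t ^ 2) := by
    intro w
    have := intervalIntegral.integral_Iic_add_Ioi (b := w) (f := fun t : ℝ => Real.exp (-t ^ 2))
      gauss_integrable.integrableOn gauss_integrable.integrableOn
    linarith
  have hint : ∫ t in (0:ℝ)..v, Real.exp (-t ^ 2)
      = (∫ t in Iic v, Real.exp (-t ^ 2)) - ∫ t in Iic (0:ℝ), Real.exp (-t ^ 2) := by
    rw [intervalIntegral.integral_Iic_sub_Iic gauss_integrable.integrableOn gauss_integrable.integrableOn]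
  have hsub : ∫ t in Ioi (0:ℝ), Real.exp (-(t + v) ^ 2)
      = (∫ t in Ioi (0:ℝ), Real.exp (-t ^ 2)) - ∫ t in (0:ℝ)..v, Real.exp (-t ^ 2) := by
    rw [shift_eq, hIoi v, hIoi 0, hint]; ring
  have hpi : Real.sqrt Real.pi ≠ 0 := by
    positivity
  rw [erf, hsub, gauss_int]
  field_simp

end ErfAux

namespace ErfAux

lemma erf_neg (z : ℝ) : erf (-z) = - erf z := by
  have h := intervalIntegral.integral_comp_neg (a := (0:ℝ)) (b := z)
    (fun t : ℝ => Real.exp (-t ^ 2))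
  simp only [neg_sq, neg_zero] at h
  rw [erf, erf, h, intervalIntegral.integral_symm]
  ring

lemma erfc_nonneg (v : ℝ) : 0 ≤ 1 - erf v := by
  rw [erfc_eq]
  have h1 : 0 ≤ ∫ t in Ioi (0:ℝ), Real.exp (-(t + v) ^ 2) :=
    integral_nonneg fun t => (Real.exp_nonneg _)
  positivity

lemma erfc_le {v : ℝ} (hv : 0 ≤ v) : 1 - erf v ≤ Real.exp (-v ^ 2) := by
  rw [erfc_eq]
  have hmono : (∫ t in Ioi (0:ℝ), Real.exp (-(t + v) ^ 2))
      ≤ ∫ t in Ioi (0:ℝ), Real.exp (-v ^ 2) * Real.exp (-t ^ 2) := by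
    refine setIntegral_mono_on (shift_integrable v).integrableOn
      ((gauss_integrable.const_mul _).integrableOn) measurableSet_Ioi ?_
    intro t ht
    rw [← Real.exp_add, Real.exp_le_exp]
    nlinarith [mul_nonneg (le_of_lt (mem_Ioi.mp ht)) hv]
  have h2 : (∫ t in Ioi (0:ℝ), Real.exp (-v ^ 2) * Real.exp (-t ^ 2))
      = Real.exp (-v ^ 2) * (Real.sqrt Real.pi / 2) := by
    rw [integral_const_mul, gauss_int]
  have hpi : (0:ℝ) < Real.sqrt Real.pi := Real.sqrt_pos.mpr Real.pi_pos
  calc (2 / Real.sqrt Real.pi) * ∫ t in Ioi (0:ℝ), Real.exp (-(t + v) ^ 2)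
      ≤ (2 / Real.sqrt Real.pi) * (Real.exp (-v ^ 2) * (Real.sqrt Real.pi / 2)) := by
        rw [← h2]; exact mul_le_mul_of_nonneg_left hmono (by positivity)
    _ = Real.exp (-v ^ 2) := by field_simp

lemma erf_tendsto_atTop : Tendsto erf atTop (nhds 1) := by
  have h := intervalIntegral_tendsto_integral_Ioi (0:ℝ) gauss_integrable.integrableOn tendsto_id
  rw [gauss_int] at h
  have h2 := h.const_mul (2 / Real.sqrt Real.pi)
  have hpi : Real.sqrt Real.pi ≠ 0 := ne_of_gt (Real.sqrt_pos.mpr Real.pi_pos)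
  have h3 : (2 / Real.sqrt Real.pi) * (Real.sqrt Real.pi / 2) = 1 := by field_simp
  rw [h3] at h2
  exact h2.congr fun z => rfl

lemma core {b : ℝ} (u : ℝ) (hb : 0 < b) :
    Real.exp (2 * b * u) * (1 - erf (u + b))
      < Real.exp (-(2 * b * u)) * (1 - erf (u - b)) := by
  rw [erfc_eq, erfc_eq]
  have hpi : (0:ℝ) < 2 / Real.sqrt Real.pi := by
    have := Real.sqrt_pos.mpr Real.pi_pos; positivity
  rw [mul_left_comm, mul_left_comm (Real.exp (-(2*b*u)))]
  refine mul_lt_mul_of_pos_left ?_ hpi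
  rw [← integral_const_mul, ← integral_const_mul]
  set f : ℝ → ℝ := fun t => Real.exp (2*b*u) * Real.exp (-(t + (u + b)) ^ 2) with hf
  set g : ℝ → ℝ := fun t => Real.exp (-(2*b*u)) * Real.exp (-(t + (u - b)) ^ 2) with hg
  have hfi : IntegrableOn f (Ioi 0) := ((shift_integrable (u+b)).const_mul _).integrableOn
  have hgi : IntegrableOn g (Ioi 0) := ((shift_integrable (u-b)).const_mul _).integrableOn
  have hlt : ∀ t ∈ Ioi (0:ℝ), f t < g t := by
    intro t ht
    have ht' : 0 < t := mem_Ioi.mp ht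
    simp only [hf, hg, ← Real.exp_add, Real.exp_lt_exp]
    nlinarith [mul_pos hb ht']
  have hpos : 0 < ∫ t in Ioi (0:ℝ), (g t - f t) := by
    rw [setIntegral_pos_iff_support_of_nonneg_ae]
    · refine lt_of_lt_of_le ?_ (measure_mono (fun t ht => ⟨?_, ht⟩))
      · simp [Real.volume_Ioi]
      · exact fun h => absurd h (by simpa using (sub_pos.mpr (hlt t ht)).ne')
    · refine (ae_restrict_iff' measurableSet_Ioi).2 (ae_of_all _ fun t ht => ?_)
      exact sub_nonneg.mpr (hlt t ht).le
    · exact hgi.sub hfi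
  have := integral_sub hgi hfi
  rw [this] at hpos
  linarith

end ErfAux
theorem stmt19 (c d r T : ℝ) (hc : 0 < c) (hd : 0 < d) (hr : 0 < r) (hT : 0 < T)
    (φ KT K₀ : ℝ → ℝ) (C₀ : ℝ)
    (hφ : ∀ x : ℝ, φ x =
      (Real.exp (Real.sqrt (c / d) * x) / 2) *
        (1 + erf (-(x / (2 * Real.sqrt (d * T))) - Real.sqrt (c * T))))
    (hC₀ : C₀ = (1 / (2 * r)) * Real.sqrt (Real.pi / (2 * d * c)))
    (hKT : ∀ x : ℝ, KT x = C₀ * (φ x + φ (-x)))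
    (hK₀ : ∀ x : ℝ, K₀ x = C₀ * Real.exp (-Real.sqrt (c / d) * |x|)) :
    (∀ x : ℝ, KT x < K₀ x) ∧
    Filter.Tendsto (fun x : ℝ => KT x / K₀ x) Filter.atTop (nhds 1) ∧
    Filter.Tendsto (fun x : ℝ => KT x / K₀ x) Filter.atBot (nhds 1) := by
  set a := Real.sqrt (c / d) with ha_def
  set s := 2 * Real.sqrt (d * T) with hs_def
  set b := Real.sqrt (c * T) with hb_def
  have ha : 0 < a := Real.sqrt_pos.mpr (by positivity)
  have hs : 0 < s := by rw [hs_def]; positivity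
  have hb : 0 < b := Real.sqrt_pos.mpr (mul_pos hc hT)
  have has : a * s = 2 * b := by
    rw [ha_def, hs_def, hb_def,
      show Real.sqrt (c / d) * (2 * Real.sqrt (d * T))
        = 2 * (Real.sqrt (c / d) * Real.sqrt (d * T)) by ring,
      ← Real.sqrt_mul (by positivity) (d * T),
      show c / d * (d * T) = c * T by field_simp]
  have hC : 0 < C₀ := by rw [hC₀]; positivity
  have hax : ∀ x : ℝ, a * x = 2 * b * (x / s) := by
    intro x
    field_simp
    linear_combination x * has
  have hφ1 : ∀ x : ℝ, φ x = Real.exp (a * x) / 2 * (1 - erf (x / s + b)) := by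
    intro x
    rw [hφ x, show -(x / s) - b = -(x / s + b) by ring, ErfAux.erf_neg]
    ring
  have hφ2 : ∀ x : ℝ, φ (-x) = Real.exp (-(a * x)) / 2 * (1 + erf (x / s - b)) := by
    intro x
    rw [hφ (-x), show -(-x / s) - b = x / s - b by ring,
      show a * (-x) = -(a * x) by ring]
  have key : ∀ x : ℝ, 0 ≤ x → φ x + φ (-x) < Real.exp (-(a * x)) := by
    intro x hx
    have hcore := ErfAux.core (x / s) hb
    rw [← hax x] at hcore
    calc φ x + φ (-x)
        = Real.exp (-(a * x)) + (Real.exp (a * x) * (1 - erf (x / s + b))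
            - Real.exp (-(a * x)) * (1 - erf (x / s - b))) / 2 := by
          rw [hφ1 x, hφ2 x]; ring
      _ < Real.exp (-(a * x)) := by linarith
  have part1 : ∀ x : ℝ, KT x < K₀ x := by
    intro x
    rw [hKT x, hK₀ x]
    refine mul_lt_mul_of_pos_left ?_ hC
    rcases abs_cases x with ⟨h, hx⟩ | ⟨h, hx⟩
    · rw [h, neg_mul]
      exact key x hx
    · rw [h]
      have := key (-x) (by linarith)
      rw [neg_neg, add_comm] at this
      convert this using 2
      · rfl
      ring
  have hratio : ∀ x : ℝ, 0 < x → KT x / K₀ x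
      = Real.exp (2 * (a * x)) * (1 - erf (x / s + b)) / 2 + (1 + erf (x / s - b)) / 2 := by
    intro x hx
    rw [hKT x, hK₀ x, abs_of_pos hx, mul_div_mul_left _ _ (ne_of_gt hC), hφ1 x, hφ2 x,
      div_eq_iff (Real.exp_ne_zero _)]
    simp only [neg_mul]
    have f1 : Real.exp (2 * (a * x)) * Real.exp (-(a * x)) = Real.exp (a * x) := by
      rw [← Real.exp_add]; ring_nf
    linear_combination ((erf (x / s + b) - 1) / 2) * f1
  have h1 : Filter.Tendsto (fun x : ℝ => x / s - b) Filter.atTop Filter.atTop := by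
    have := Filter.tendsto_atTop_add_const_right Filter.atTop (-b)
      (Filter.tendsto_id.atTop_div_const hs)
    simpa [sub_eq_add_neg] using this
  have hlim1 : Filter.Tendsto
      (fun x : ℝ => Real.exp (2 * (a * x)) * (1 - erf (x / s + b)) / 2)
      Filter.atTop (nhds 0) := by
    have hupper_lim : Filter.Tendsto (fun x : ℝ => Real.exp (-(x / s - b) ^ 2) / 2)
        Filter.atTop (nhds 0) := by
      have h2 : Filter.Tendsto (fun x : ℝ => -(x / s - b) ^ 2) Filter.atTop Filter.atBot :=
        tendsto_neg_atTop_atBot.comp ((tendsto_pow_atTop (two_ne_zero)).comp h1)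
      have := (Real.tendsto_exp_atBot.comp h2).div_const 2
      simpa using this
    refine tendsto_of_tendsto_of_tendsto_of_le_of_le' tendsto_const_nhds hupper_lim ?_ ?_
    · exact Filter.Eventually.of_forall fun x =>
        div_nonneg (mul_nonneg (Real.exp_pos _).le (ErfAux.erfc_nonneg _)) two_pos.le
    · filter_upwards [Filter.eventually_ge_atTop 0] with x hx
      have hv : (0:ℝ) ≤ x / s + b := by positivity
      have hle := ErfAux.erfc_le hv
      have h2 : Real.exp (2 * (a * x)) * (1 - erf (x / s + b))
          ≤ Real.exp (2 * (a * x)) * Real.exp (-(x / s + b) ^ 2) :=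
        mul_le_mul_of_nonneg_left hle (Real.exp_pos _).le
      have h3 : Real.exp (2 * (a * x)) * Real.exp (-(x / s + b) ^ 2)
          = Real.exp (-(x / s - b) ^ 2) := by
        rw [← Real.exp_add]
        congr 1
        linear_combination 2 * hax x
      linarith
  have hlim2 : Filter.Tendsto (fun x : ℝ => (1 + erf (x / s - b)) / 2)
      Filter.atTop (nhds 1) := by
    have h2 := ((ErfAux.erf_tendsto_atTop.comp h1).const_add 1).div_const 2
    norm_num at h2
    exact h2
  have toplim : Filter.Tendsto (fun x : ℝ => KT x / K₀ x) Filter.atTop (nhds 1) := by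
    have hsum := hlim1.add hlim2
    rw [zero_add] at hsum
    exact hsum.congr' (by
      filter_upwards [Filter.eventually_gt_atTop 0] with x hx
      exact (hratio x hx).symm)
  have heven : ∀ x : ℝ, KT (-x) / K₀ (-x) = KT x / K₀ x := by
    intro x
    rw [hKT, hKT, hK₀, hK₀, neg_neg, abs_neg, add_comm (φ (-x))]
  refine ⟨part1, toplim, ?_⟩
  have := toplim.comp tendsto_neg_atBot_atTop
  exact (this.congr fun x => heven x)
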